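/- Let p be a prime and n ≥ 0. For σ drawn uniformly from the nonsimple p-nary butterfly permutations B_n^{(p)}, the expected number of cycles is E C(σ) = (2 − 1/p)^n. Moreover, for p = 2 the second moment is E[C(σ)²] = (4/3)·(3/2)^{2n} − (1/3)·(3/2)^n, so Var C(σ) = (1/3)·(3/2)^{2n} − (1/3)·(3/2)^n. -/

import Mathlib

/-- Kronecker product of permutations: `(i, r) ↦ (σ i, π r)` under the
row-major identification `Fin (a * b) ≃ Fin a × Fin b`. -/
def permKron {a b : ℕ} (σ : Equiv.Perm (Fin a)) (π : Equiv.Perm (Fin b)) :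
    Equiv.Perm (Fin (a * b)) :=
  finProdFinEquiv.symm.trans ((Equiv.prodCongr σ π).trans finProdFinEquiv)

/-- Direct (block) sum of permutations: `(i, r) ↦ (i, π i r)`. -/
def permBlockSum {a b : ℕ} (π : Fin a → Equiv.Perm (Fin b)) :
    Equiv.Perm (Fin (a * b)) :=
  finProdFinEquiv.symm.trans ((Equiv.prodCongrRight π).trans finProdFinEquiv)

/-- The simple `m`-nary butterfly permutations of `Fin (m ^ n)`:
Kronecker products `τ^{a₁} ⊗ ⋯ ⊗ τ^{aₙ}` of powers of the standard `m`-cycle `τ = finRotate m`. -/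
def simpleButterfly (m : ℕ) : (n : ℕ) → Set (Equiv.Perm (Fin (m ^ n)))
  | 0 => {1}
  | n + 1 =>
    {σ | ∃ (a : ℤ) (π : Equiv.Perm (Fin (m ^ n))), π ∈ simpleButterfly m n ∧
      σ = (finCongr (pow_succ' m n).symm).permCongr (permKron (finRotate m ^ a) π)}

/-- The nonsimple `m`-nary butterfly permutations of `Fin (m ^ n)`:
`B₀ = {1}`, `B_{n+1} = {(τ^a ⊗ id) ∘ (σ₁ ⊕ ⋯ ⊕ σ_m) : σᵢ ∈ B_n}`. -/
def nonsimpleButterfly (m : ℕ) : (n : ℕ) → Set (Equiv.Perm (Fin (m ^ n)))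
  | 0 => {1}
  | n + 1 =>
    {σ | ∃ (a : ℤ) (π : Fin m → Equiv.Perm (Fin (m ^ n))),
      (∀ i, π i ∈ nonsimpleButterfly m n) ∧
      σ = (finCongr (pow_succ' m n).symm).permCongr
        (permKron (finRotate m ^ a) 1 * permBlockSum π)}

/-- The length of the longest increasing subsequence of a permutation. -/
noncomputable def LIS {M : ℕ} (σ : Equiv.Perm (Fin M)) : ℕ :=
  sSup {k | ∃ t : Finset (Fin M), t.card = k ∧ StrictMonoOn (⇑σ) ↑t}

/-- The length of the longest decreasing subsequence of a permutation. -/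
noncomputable def LDS {M : ℕ} (σ : Equiv.Perm (Fin M)) : ℕ :=
  sSup {k | ∃ t : Finset (Fin M), t.card = k ∧ StrictAntiOn (⇑σ) ↑t}

/-- The number of cycles in the disjoint cycle decomposition of `σ`,
counting fixed points as cycles of length 1. -/
def numCycles {M : ℕ} (σ : Equiv.Perm (Fin M)) : ℕ :=
  Multiset.card σ.cycleType + (Finset.univ.filter fun x => σ x = x).card

/-- The number of fixed points of `σ`. -/
def numFixed {M : ℕ} (σ : Equiv.Perm (Fin M)) : ℕ :=
  (Finset.univ.filter fun x => σ x = x).card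

open Equiv Equiv.Perm
open Fin.NatCast

/-- Same-cycle setoid. -/
def scSetoid {α : Type*} (σ : Equiv.Perm α) : Setoid α :=
  ⟨σ.SameCycle, ⟨Equiv.Perm.SameCycle.refl σ, fun h => h.symm, fun h h' => h.trans h'⟩⟩

/-- Number of orbits of a permutation. -/
noncomputable def orbCount {α : Type*} (σ : Equiv.Perm α) : ℕ :=
  Nat.card (Quotient (scSetoid σ))

def numCycles' {M : ℕ} (σ : Equiv.Perm (Fin M)) : ℕ :=
  Multiset.card σ.cycleType + (Finset.univ.filter fun x => σ x = x).card

lemma sameCycle_fix {α : Type*} {σ : Equiv.Perm α} {x y : α} (h : σ.SameCycle x y)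
    (hx : σ x = x) : y = x := by
  obtain ⟨k, hk⟩ := h
  rw [← hk]; exact (Function.IsFixedPt.perm_zpow hx k)

lemma numCycles_eq_orbCount {M : ℕ} (σ : Equiv.Perm (Fin M)) : numCycles' σ = orbCount σ := by
  classical
  let g : Fin M → ({c // c ∈ σ.cycleFactorsFinset} ⊕ {x : Fin M // σ x = x}) := fun x =>
    if h : σ x = x then Sum.inr ⟨x, h⟩ else
      Sum.inl ⟨σ.cycleOf x, cycleOf_mem_cycleFactorsFinset_iff.2 (mem_support.2 h)⟩
  have hg : ∀ x y : Fin M, σ.SameCycle x y → g x = g y := by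
    intro x y hxy
    by_cases hx : σ x = x
    · have : y = x := sameCycle_fix hxy hx
      subst this; rfl
    · have hy : ¬ σ y = y := fun hy => hx (by rw [sameCycle_fix hxy.symm hy]; exact hy)
      simp only [g, dif_neg hx, dif_neg hy]
      exact congrArg _ (Subtype.ext hxy.cycleOf_eq)
  have key : Quotient (scSetoid σ) ≃ ({c // c ∈ σ.cycleFactorsFinset} ⊕ {x : Fin M // σ x = x}) := by
    refine Equiv.ofBijective (Quotient.lift g hg) ⟨?_, ?_⟩
    · rintro ⟨x⟩ ⟨y⟩ h
      have h' : g x = g y := h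
      apply Quotient.sound
      simp only [g] at h'
      by_cases hx : σ x = x <;> by_cases hy : σ y = y
      · rw [dif_pos hx, dif_pos hy] at h'
        simp only [Sum.inr.injEq, Subtype.mk.injEq] at h'
        subst h'; exact Equiv.Perm.SameCycle.refl σ x
      · rw [dif_pos hx, dif_neg hy] at h'
        exact absurd h' (by simp)
      · rw [dif_neg hx, dif_pos hy] at h'
        exact absurd h' (by simp)
      · rw [dif_neg hx, dif_neg hy] at h'
        simp only [Sum.inl.injEq, Subtype.mk.injEq] at h'
        show σ.SameCycle x y
        have hcyc : σ.cycleOf x = σ.cycleOf y := h'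
        have hy' : y ∈ (σ.cycleOf x).support := by
          rw [hcyc, mem_support_cycleOf_iff]
          exact ⟨Equiv.Perm.SameCycle.refl σ y, mem_support.2 hy⟩
        exact ((mem_support_cycleOf_iff).1 hy').1
    · rintro (⟨c, hc⟩ | ⟨x, hx⟩)
      · obtain ⟨hcyc, hmem⟩ := (mem_cycleFactorsFinset_iff).1 hc
        obtain ⟨x, hx⟩ := hcyc.nonempty_support
        have hxs : σ x ≠ x := by
          have := hmem x hx
          intro h; rw [← this] at h; exact (mem_support.1 hx) h
        refine ⟨Quotient.mk _ x, ?_⟩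
        show g x = _
        simp only [g, dif_neg hxs]
        exact congrArg _ (Subtype.ext (cycle_is_cycleOf hx hc).symm)
      · exact ⟨Quotient.mk _ x, by show g x = _; simp only [g, dif_pos hx]⟩
  have := Nat.card_congr key
  rw [orbCount, this, Nat.card_sum]
  simp only [numCycles', Equiv.Perm.cycleType, Nat.card_eq_fintype_card]
  rw [Fintype.card_coe, Fintype.card_subtype]
  rw [Multiset.card_map]; rfl

lemma permCongr_mul' {α β : Type*} (e : α ≃ β) (σ τ : Equiv.Perm α) :
    e.permCongr (σ * τ) = e.permCongr σ * e.permCongr τ := by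
  ext x; simp [Equiv.permCongr_apply, Equiv.Perm.mul_apply]

lemma permCongr_one' {α β : Type*} (e : α ≃ β) :
    e.permCongr (1 : Equiv.Perm α) = 1 := by
  ext x; simp [Equiv.permCongr_apply]

lemma permCongr_inv' {α β : Type*} (e : α ≃ β) (σ : Equiv.Perm α) :
    e.permCongr σ⁻¹ = (e.permCongr σ)⁻¹ := by
  apply eq_inv_of_mul_eq_one_left
  rw [← permCongr_mul', inv_mul_cancel, permCongr_one']

lemma permCongr_pow' {α β : Type*} (e : α ≃ β) (σ : Equiv.Perm α) (k : ℕ) :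
    e.permCongr (σ ^ k) = (e.permCongr σ) ^ k := by
  induction k with
  | zero => simpa using permCongr_one' e
  | succ k ih => rw [pow_succ, pow_succ, permCongr_mul', ih]

lemma permCongr_zpow {α β : Type*} (e : α ≃ β) (σ : Equiv.Perm α) (k : ℤ) :
    e.permCongr (σ ^ k) = (e.permCongr σ) ^ k := by
  cases k with
  | ofNat k => simpa using permCongr_pow' e σ k
  | negSucc k => rw [zpow_negSucc, zpow_negSucc, permCongr_inv', permCongr_pow']

lemma sameCycle_permCongr {α β : Type*} (e : α ≃ β) (σ : Equiv.Perm α) (x y : α) :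
    σ.SameCycle x y ↔ (e.permCongr σ).SameCycle (e x) (e y) := by
  constructor
  · rintro ⟨k, hk⟩
    exact ⟨k, by rw [← permCongr_zpow]; simp [Equiv.permCongr_apply, hk]⟩
  · rintro ⟨k, hk⟩
    refine ⟨k, ?_⟩
    rw [← permCongr_zpow] at hk
    simpa [Equiv.permCongr_apply] using hk

lemma orbCount_permCongr {α β : Type*} (e : α ≃ β) (σ : Equiv.Perm α) :
    orbCount (e.permCongr σ) = orbCount σ := by
  exact (Nat.card_congr (Quotient.congr e (fun a b => sameCycle_permCongr e σ a b))).symm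

lemma natCard_sigma {ι : Type*} [Fintype ι] {f : ι → Type*} [∀ i, Finite (f i)] :
    Nat.card ((i : ι) × f i) = ∑ i, Nat.card (f i) := by
  classical
  letI : ∀ i, Fintype (f i) := fun i => Fintype.ofFinite _
  simp [Nat.card_eq_fintype_card]

lemma prodCongrRight_zpow {ι β : Type*} (π : ι → Equiv.Perm β) (k : ℤ) :
    (Equiv.prodCongrRight π) ^ k = Equiv.prodCongrRight (fun i => (π i) ^ k) := by
  have hone : Equiv.prodCongrRight (fun _ : ι => (1 : Equiv.Perm β)) = 1 := by
    ext ⟨i, r⟩ <;> simp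
  have hmul : ∀ (π ρ : ι → Equiv.Perm β),
      Equiv.prodCongrRight π * Equiv.prodCongrRight ρ
        = Equiv.prodCongrRight (fun i => π i * ρ i) := by
    intro π ρ; ext ⟨i, r⟩ <;> simp
  let h : (ι → Equiv.Perm β) →* Equiv.Perm (ι × β) :=
    { toFun := Equiv.prodCongrRight, map_one' := hone, map_mul' := fun a b => (hmul a b) }
  have := (map_zpow h π k).symm
  exact this

lemma orbCount_prodCongrRight {ι β : Type*} [Fintype ι] [Finite β] (π : ι → Equiv.Perm β) :
    orbCount (Equiv.prodCongrRight π) = ∑ i, orbCount (π i) := by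
  classical
  have hresp : ∀ x y : ι × β,
      Equiv.Perm.SameCycle (Equiv.prodCongrRight π : Equiv.Perm (ι × β)) x y →
      x.1 = y.1 ∧ (π x.1).SameCycle x.2 y.2 := by
    rintro ⟨i, r⟩ ⟨j, s⟩ ⟨k, hk⟩
    rw [prodCongrRight_zpow] at hk
    simp only [Equiv.prodCongrRight_apply] at hk
    injection hk with ha hb
    exact ⟨ha, ⟨k, hb⟩⟩
  let F : Quotient (scSetoid (Equiv.prodCongrRight π)) → (i : ι) × Quotient (scSetoid (π i)) :=
    Quotient.lift (fun x => ⟨x.1, Quotient.mk _ x.2⟩) (by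
      rintro ⟨i, r⟩ ⟨j, s⟩ hxy
      obtain ⟨h1, h2⟩ := hresp _ _ hxy
      dsimp only at h1 h2 ⊢
      subst h1
      exact congrArg _ (Quotient.sound h2))
  have hbij : Function.Bijective F := by
    constructor
    · rintro ⟨⟨i, r⟩⟩ ⟨⟨j, s⟩⟩ h
      have h' : (⟨i, Quotient.mk _ r⟩ : (i : ι) × Quotient (scSetoid (π i)))
          = ⟨j, Quotient.mk _ s⟩ := h
      obtain ⟨h1, h2⟩ := Sigma.mk.inj_iff.1 h'
      subst h1
      have h2' : (Quotient.mk _ r : Quotient (scSetoid (π i))) = Quotient.mk _ s :=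
        eq_of_heq h2
      have hsc : (π i).SameCycle r s := Quotient.exact h2'
      obtain ⟨k, hk⟩ := hsc
      exact Quotient.sound ⟨k, by rw [prodCongrRight_zpow]; simp [hk]⟩
    · rintro ⟨i, q⟩
      obtain ⟨r⟩ := q
      exact ⟨Quotient.mk _ (i, r), rfl⟩
  rw [orbCount, Nat.card_congr (Equiv.ofBijective F hbij), natCard_sigma]
  rfl

lemma orbCount_cyclic {ι β : Type*} [Finite ι] [Finite β] (σ : Equiv.Perm (ι × β)) (c : Equiv.Perm ι)
    (i₀ : ι) (m : ℕ) (ρ : Equiv.Perm β)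
    (h1 : ∀ x : ι × β, (σ x).1 = c x.1)
    (htrans : ∀ i, ∃ k : ℕ, (c ^ k) i = i₀)
    (hρ : ∀ r, (σ ^ m) (i₀, r) = (i₀, ρ r))
    (hper : ∀ k : ℤ, (c ^ k) i₀ = i₀ → (m : ℤ) ∣ k) :
    orbCount σ = orbCount ρ := by
  classical
  -- powers track the base permutation
  have hA : ∀ k : ℕ, ∀ x : ι × β, ((σ ^ k) x).1 = (c ^ k) x.1 := by
    intro k
    induction k with
    | zero => intro x; simp
    | succ k ih =>
      intro x
      rw [pow_succ, pow_succ]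
      simp only [Equiv.Perm.mul_apply]
      rw [ih (σ x), h1 x]
  have hAz : ∀ k : ℤ, ∀ x : ι × β, ((σ ^ k) x).1 = (c ^ k) x.1 := by
    intro k x
    cases k with
    | ofNat k => simpa using hA k x
    | negSucc k =>
      have hcomp : (σ ^ (k + 1)) ((σ ^ Int.negSucc k) x) = x := by
        have h0 : (σ ^ (k + 1)) * (σ ^ Int.negSucc k) = 1 := by
          have he : ((k + 1 : ℕ) : ℤ) + Int.negSucc k = 0 := by
            rw [Int.negSucc_eq]; push_cast; ring
          rw [← zpow_natCast σ (k + 1), ← zpow_add, he, zpow_zero]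
        calc (σ ^ (k + 1)) ((σ ^ Int.negSucc k) x)
            = ((σ ^ (k + 1)) * (σ ^ Int.negSucc k)) x := rfl
          _ = x := by rw [h0]; rfl
      have h := hA (k + 1) ((σ ^ Int.negSucc k) x)
      rw [hcomp] at h
      conv_rhs => rw [zpow_negSucc]
      apply Equiv.injective (c ^ (k + 1))
      rw [Equiv.Perm.inv_def, Equiv.apply_symm_apply]
      exact h.symm
  have hB : ∀ k : ℕ, ∀ r : β, (σ ^ (m * k)) (i₀, r) = (i₀, (ρ ^ k) r) := by
    intro k
    induction k with
    | zero => intro r; simp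
    | succ k ih =>
      intro r
      have : m * (k + 1) = m * k + m := by ring
      rw [this, pow_add]
      simp only [Equiv.Perm.mul_apply]
      rw [hρ r, ih (ρ r), pow_succ]
      simp
  have hBz : ∀ k : ℤ, ∀ r : β, (σ ^ ((m : ℤ) * k)) (i₀, r) = (i₀, (ρ ^ k) r) := by
    intro k r
    cases k with
    | ofNat k =>
      have := hB k r
      rw [← zpow_natCast] at this
      simpa using this
    | negSucc k =>
      have h := hB (k + 1) ((ρ ^ (k + 1))⁻¹ r)
      rw [Equiv.Perm.inv_def, Equiv.apply_symm_apply] at h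
      have h2 : ((i₀, (ρ ^ (k + 1))⁻¹ r) : ι × β) = (σ ^ (m * (k + 1)))⁻¹ (i₀, r) := by
        rw [← h]; simp
      have hexp : (m : ℤ) * Int.negSucc k = -((m * (k + 1) : ℕ) : ℤ) := by
        rw [Int.negSucc_eq]; push_cast; ring
      rw [hexp, zpow_neg, zpow_natCast, ← h2, zpow_negSucc]
  -- the bijection between orbit spaces
  have hresp : ∀ r s : β, ρ.SameCycle r s → σ.SameCycle (i₀, r) (i₀, s) := by
    rintro r s ⟨k, hk⟩
    exact ⟨(m : ℤ) * k, by rw [hBz k r, hk]⟩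
  let F : Quotient (scSetoid ρ) → Quotient (scSetoid σ) :=
    Quotient.lift (fun r => Quotient.mk (scSetoid σ) (i₀, r))
      (fun r s h => Quotient.sound (hresp r s h))
  have hbij : Function.Bijective F := by
    constructor
    · rintro ⟨r⟩ ⟨s⟩ h
      have h' : σ.SameCycle (i₀, r) (i₀, s) := Quotient.exact h
      obtain ⟨k, hk⟩ := h'
      have hfix : (c ^ k) i₀ = i₀ := by
        have := hAz k (i₀, r)
        rw [hk] at this
        exact this.symm
      obtain ⟨j, hj⟩ := hper k hfix
      rw [hj, hBz j r] at hk
      have : (ρ ^ j) r = s := congrArg Prod.snd hk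
      exact Quotient.sound ⟨j, this⟩
    · rintro ⟨⟨i, r⟩⟩
      obtain ⟨k, hk⟩ := htrans i
      have hfst : ((σ ^ k) (i, r)).1 = i₀ := by rw [hA k (i, r)]; exact hk
      refine ⟨Quotient.mk _ ((σ ^ k) (i, r)).2, ?_⟩
      show Quotient.mk (scSetoid σ) (i₀, ((σ ^ k) (i, r)).2) = _
      apply Quotient.sound
      show σ.SameCycle _ _
      have : ((i₀, ((σ ^ k) (i, r)).2) : ι × β) = (σ ^ k) (i, r) := by
        rw [← hfst]
      refine Equiv.Perm.SameCycle.symm ⟨(k : ℤ), ?_⟩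
      rw [zpow_natCast, ← this]
  exact (Nat.card_congr (Equiv.ofBijective F hbij)).symm

/-! ### Rotation arithmetic -/

lemma rot_pow_apply (m k : ℕ) (i : Fin (m + 1)) :
    ((finRotate (m + 1)) ^ k) i = i + (k : Fin (m + 1)) := by
  induction k generalizing i with
  | zero => simp
  | succ k ih =>
    rw [pow_succ, Equiv.Perm.mul_apply, finRotate_succ_apply, ih]
    push_cast
    abel

lemma rot_pow_card (m : ℕ) : (finRotate (m + 1)) ^ (m + 1) = 1 := by
  ext i
  rw [rot_pow_apply]
  simp

lemma fin_add_cast_eq_zero (m : ℕ) (i : Fin (m + 1)) (j : ℕ) :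
    i + (j : Fin (m + 1)) = 0 ↔ (m + 1) ∣ (i.val + j) := by
  rw [Fin.ext_iff, Fin.val_add, Fin.val_natCast]
  rw [Nat.dvd_iff_mod_eq_zero, Nat.add_mod (i.val) j, Nat.mod_eq_of_lt i.isLt]
  simp

lemma pow_mod_of_pow_eq_one {G : Type*} [Group G] {g : G} {d : ℕ} (hg : g ^ d = 1) (a : ℕ) :
    g ^ a = g ^ (a % d) := by
  conv_lhs => rw [← Nat.div_add_mod a d]
  rw [pow_add, pow_mul, hg, one_pow, one_mul]

lemma zpow_mod_of_pow_eq_one {G : Type*} [Group G] {g : G} {d : ℕ} (hd : 0 < d)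
    (hg : g ^ d = 1) (z : ℤ) : g ^ z = g ^ ((z % d).toNat) := by
  have hd' : (d : ℤ) ≠ 0 := by exact_mod_cast hd.ne'
  have h1 : g ^ (d : ℤ) = 1 := by rw [zpow_natCast, hg]
  conv_lhs => rw [← Int.mul_ediv_add_emod z d]
  rw [zpow_add, zpow_mul, h1, one_zpow, one_mul,
    ← zpow_natCast g (z % d).toNat, Int.toNat_of_nonneg (Int.emod_nonneg z hd')]


/-! ### The butterfly step permutation in product form -/

def bflyP {p q : ℕ} (a : ℕ) (π : Fin p → Equiv.Perm (Fin q)) : Equiv.Perm (Fin p × Fin q) :=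
  (Equiv.prodCongr ((finRotate p) ^ a) (1 : Equiv.Perm (Fin q))) * Equiv.prodCongrRight π

lemma bflyP_apply {p q : ℕ} (a : ℕ) (π : Fin p → Equiv.Perm (Fin q)) (x : Fin p × Fin q) :
    bflyP a π x = (((finRotate p) ^ a) x.1, π x.1 x.2) := rfl

lemma bflyP_congr_exp {p q : ℕ} {a b : ℕ} (π : Fin p → Equiv.Perm (Fin q))
    (h : (finRotate p) ^ a = (finRotate p) ^ b) : bflyP a π = bflyP b π := by
  unfold bflyP; rw [h]

lemma bflyP_mul {p q : ℕ} (a b : ℕ) (π ρ : Fin p → Equiv.Perm (Fin q)) :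
    bflyP a π * bflyP b ρ = bflyP (a + b) (fun i => π ((finRotate p ^ b) i) * ρ i) := by
  apply Equiv.ext
  rintro ⟨i, r⟩
  show (bflyP a π) (bflyP b ρ (i, r)) = _
  rw [bflyP_apply, bflyP_apply, bflyP_apply]
  simp only [pow_add, Equiv.Perm.mul_apply]

lemma bflyP_one {p q : ℕ} : bflyP (p := p) (q := q) 0 (fun _ => 1) = 1 := by
  apply Equiv.ext
  rintro ⟨i, r⟩
  rw [bflyP_apply]
  simp

lemma bflyP_zero {p q : ℕ} (π : Fin p → Equiv.Perm (Fin q)) :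
    bflyP 0 π = Equiv.prodCongrRight π := by
  apply Equiv.ext
  rintro ⟨i, r⟩
  rw [bflyP_apply]
  simp

/-- Word of block maps accumulated along `k` steps starting at block `i`. -/
def Wc {p q : ℕ} (c : Equiv.Perm (Fin p)) (π : Fin p → Equiv.Perm (Fin q)) :
    ℕ → Fin p → Equiv.Perm (Fin q)
  | 0, _ => 1
  | k+1, i => Wc c π k (c i) * π i

lemma bflyP_pow {p q : ℕ} (a : ℕ) (π : Fin p → Equiv.Perm (Fin q)) (k : ℕ) (x : Fin p × Fin q) :
    ((bflyP a π) ^ k) x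
      = ((((finRotate p) ^ a) ^ k) x.1, Wc ((finRotate p) ^ a) π k x.1 x.2) := by
  induction k generalizing x with
  | zero => simp [Wc]
  | succ k ih =>
    rw [pow_succ, Equiv.Perm.mul_apply, bflyP_apply, ih]
    show _ = ((((finRotate p) ^ a) ^ (k+1)) x.1, Wc ((finRotate p) ^ a) π (k+1) x.1 x.2)
    rw [Wc]
    simp only [Equiv.Perm.mul_apply, pow_succ]


lemma Wc_congr {p q : ℕ} (c : Equiv.Perm (Fin p)) (π π' : Fin p → Equiv.Perm (Fin q))
    (k : ℕ) (i : Fin p) (h : ∀ t, t < k → π ((c ^ t) i) = π' ((c ^ t) i)) :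
    Wc c π k i = Wc c π' k i := by
  induction k generalizing i with
  | zero => rfl
  | succ k ih =>
    rw [Wc, Wc]
    have h0 : π i = π' i := by
      have := h 0 (Nat.succ_pos k); simpa using this
    rw [h0, ih (c i) (fun t ht => by
      have := h (t + 1) (by omega)
      rw [pow_succ, Equiv.Perm.mul_apply] at this
      exact this)]

lemma Wc_mem {p q : ℕ} (c : Equiv.Perm (Fin p)) (π : Fin p → Equiv.Perm (Fin q))
    (s : Finset (Equiv.Perm (Fin q))) (h1 : (1 : Equiv.Perm (Fin q)) ∈ s)
    (hmul : ∀ σ ∈ s, ∀ τ ∈ s, σ * τ ∈ s) (hπ : ∀ i, π i ∈ s) (k : ℕ) (i : Fin p) :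
    Wc c π k i ∈ s := by
  induction k generalizing i with
  | zero => exact h1
  | succ k ih => exact hmul _ (ih (c i)) _ (hπ i)

/-- The identification `Fin p × Fin (p^n) ≃ Fin (p^(n+1))`. -/
def Ebig (p n : ℕ) : Fin p × Fin (p ^ n) ≃ Fin (p ^ (n + 1)) :=
  finProdFinEquiv.trans (finCongr (pow_succ' p n).symm)

lemma permCongr_trans' {α β γ : Type*} (e₁ : α ≃ β) (e₂ : β ≃ γ) (σ : Equiv.Perm α) :
    (e₁.trans e₂).permCongr σ = e₂.permCongr (e₁.permCongr σ) := by
  ext x; simp [Equiv.permCongr_apply]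

lemma permKron_eq {a b : ℕ} (σ : Equiv.Perm (Fin a)) (π : Equiv.Perm (Fin b)) :
    permKron σ π = finProdFinEquiv.permCongr (Equiv.prodCongr σ π) := rfl

lemma permBlockSum_eq {a b : ℕ} (π : Fin a → Equiv.Perm (Fin b)) :
    permBlockSum π = finProdFinEquiv.permCongr (Equiv.prodCongrRight π) := rfl

lemma step_eq {p n : ℕ} (hp : 0 < p) (hrot : (finRotate p) ^ p = 1) (a : ℤ)
    (π : Fin p → Equiv.Perm (Fin (p ^ n))) :
    (finCongr (pow_succ' p n).symm).permCongr
        (permKron ((finRotate p) ^ a) 1 * permBlockSum π)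
      = (Ebig p n).permCongr (bflyP ((a % p).toNat) π) := by
  rw [permKron_eq, permBlockSum_eq, ← permCongr_mul', Ebig, permCongr_trans']
  have hz : (finRotate p) ^ a = (finRotate p) ^ ((a % p).toNat) :=
    zpow_mod_of_pow_eq_one hp hrot a
  have hinner : Equiv.prodCongr ((finRotate p) ^ a) 1 * Equiv.prodCongrRight π
      = bflyP ((a % p).toNat) π := by
    apply Equiv.ext
    rintro ⟨i, r⟩
    rw [bflyP_apply]
    show (Equiv.prodCongr ((finRotate p) ^ a) 1) ((Equiv.prodCongrRight π) (i, r)) = _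
    simp [hz]
  rw [hinner]

lemma mem_butterfly_succ_iff {p n : ℕ} (hp : 0 < p) (hrot : (finRotate p) ^ p = 1)
    (σ : Equiv.Perm (Fin (p ^ (n + 1)))) :
    σ ∈ nonsimpleButterfly p (n + 1) ↔
      ∃ (a : Fin p) (π : Fin p → Equiv.Perm (Fin (p ^ n))),
        (∀ i, π i ∈ nonsimpleButterfly p n) ∧ σ = (Ebig p n).permCongr (bflyP a.val π) := by
  constructor
  · rintro ⟨a, π, hπ, rfl⟩
    have h0 : (0 : ℤ) ≤ a % p := Int.emod_nonneg a (by exact_mod_cast hp.ne')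
    have h1 : a % p < p := Int.emod_lt_of_pos a (by exact_mod_cast hp)
    refine ⟨⟨(a % p).toNat, by omega⟩, π, hπ, ?_⟩
    rw [step_eq hp hrot]
  · rintro ⟨a, π, hπ, rfl⟩
    refine ⟨(a.val : ℤ), π, hπ, ?_⟩
    rw [step_eq hp hrot]
    congr 2
    rw [Int.emod_eq_of_lt (by positivity) (by exact_mod_cast a.isLt)]
    simp


lemma param_inj {p n : ℕ} (hp : 0 < p) :
    Function.Injective (fun x : Fin p × (Fin p → Equiv.Perm (Fin (p ^ n))) =>
      (Ebig p n).permCongr (bflyP x.1.val x.2)) := by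
  obtain ⟨m, rfl⟩ : ∃ m, p = m + 1 := ⟨p - 1, by omega⟩
  rintro ⟨a, π⟩ ⟨b, ρ⟩ h
  have h' : bflyP a.val π = bflyP b.val ρ := (Equiv.injective (Ebig (m+1) n).permCongr) h
  have hq : 0 < (m+1) ^ n := pow_pos (Nat.succ_pos m) n
  have happ : ∀ x : Fin (m+1) × Fin ((m+1)^n),
      ((finRotate (m+1) ^ a.val) x.1, π x.1 x.2) = ((finRotate (m+1) ^ b.val) x.1, ρ x.1 x.2) := by
    intro x
    rw [← bflyP_apply, ← bflyP_apply, h']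
  have hab : a = b := by
    have h1 := congrArg Prod.fst (happ (⟨0, Nat.succ_pos m⟩, ⟨0, hq⟩))
    simp only [rot_pow_apply] at h1
    have h2 : ((a.val : Fin (m+1))) = (b.val : Fin (m+1)) := by
      exact add_left_cancel h1
    have h3 := congrArg Fin.val h2
    rw [Fin.val_natCast, Fin.val_natCast, Nat.mod_eq_of_lt a.isLt, Nat.mod_eq_of_lt b.isLt] at h3
    exact Fin.ext h3
  refine Prod.ext hab (funext fun i => Equiv.ext fun r => ?_)
  exact congrArg Prod.snd (happ (i, r))

lemma rot_trans_of_coprime {m a : ℕ} (h1 : 1 < m + 1) (hcop : Nat.Coprime a (m + 1)) :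
    ∀ i : Fin (m + 1), ∃ k : ℕ, (((finRotate (m+1)) ^ a) ^ k) i = ⟨0, Nat.succ_pos m⟩ := by
  intro i
  obtain ⟨b, -, hb⟩ := Nat.exists_mul_mod_eq_one_of_coprime hcop h1
  refine ⟨b * ((m + 1) - i.val), ?_⟩
  rw [← pow_mul, rot_pow_apply]
  have h0 : (⟨0, Nat.succ_pos m⟩ : Fin (m+1)) = 0 := rfl
  rw [h0, fin_add_cast_eq_zero]
  set d := (m + 1) - i.val with hd0
  have hd : i.val + d = m + 1 := by omega
  have ht : a * b = (m+1) * ((a*b)/(m+1)) + 1 := by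
    conv_lhs => rw [← Nat.div_add_mod (a*b) (m+1)]
    rw [hb]
  set t := (a*b)/(m+1)
  refine ⟨1 + t * d, ?_⟩
  calc i.val + a * (b * d) = i.val + (a * b) * d := by ring
    _ = i.val + ((m+1) * t + 1) * d := by rw [← ht]
    _ = (i.val + d) + (m+1) * (t * d) := by ring
    _ = (m+1) * (1 + t * d) := by rw [hd]; ring

lemma rot_per_of_prime {p : ℕ} (hp : p.Prime) {a : ℕ} (ha : ¬ p ∣ a) :
    ∀ k : ℤ, (((finRotate p) ^ a) ^ k) ⟨0, hp.pos⟩ = ⟨0, hp.pos⟩ → (p : ℤ) ∣ k := by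
  obtain ⟨m, hm⟩ : ∃ m, p = m + 1 := ⟨p - 1, (Nat.succ_pred_eq_of_pos hp.pos).symm⟩
  subst hm
  intro k hk
  rw [← zpow_natCast (finRotate (m+1)) a, ← zpow_mul,
    zpow_mod_of_pow_eq_one (Nat.succ_pos m) (rot_pow_card m), rot_pow_apply] at hk
  have h0 : (⟨0, Nat.succ_pos (m)⟩ : Fin (m+1)) = 0 := rfl
  rw [h0] at hk
  have hk' : (0 : Fin (m+1)) + ((((a : ℤ) * k) % (m+1)).toNat : Fin (m+1)) = 0 := hk
  rw [fin_add_cast_eq_zero] at hk'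
  simp only [Fin.val_zero, Nat.zero_add] at hk'
  have hlt : ((a : ℤ) * k) % (m+1) < (m+1 : ℤ) :=
    Int.emod_lt_of_pos _ (by positivity)
  have hge : (0:ℤ) ≤ ((a : ℤ) * k) % (m+1) := Int.emod_nonneg _ (by positivity)
  have hr0 : (((a : ℤ) * k) % (m+1)).toNat = 0 :=
    Nat.eq_zero_of_dvd_of_lt hk' (by omega)
  have hz : ((a : ℤ) * k) % (m+1) = 0 := by omega
  have hdvd : ((m+1 : ℕ) : ℤ) ∣ (a : ℤ) * k := Int.dvd_of_emod_eq_zero (by exact_mod_cast hz)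
  have hprime : Prime ((m+1 : ℕ) : ℤ) := Int.prime_iff_natAbs_prime.2 (by rw [Int.natAbs_cast]; exact hp)
  rcases hprime.dvd_mul.1 hdvd with h | h
  · exact absurd (Int.ofNat_dvd.1 h) ha
  · exact h

lemma rot_c_eq_one {p a : ℕ} (hrot : (finRotate p) ^ p = 1) :
    ((finRotate p) ^ a) ^ p = 1 := by
  rw [← pow_mul, mul_comm, pow_mul, hrot, one_pow]

lemma orbCount_bflyP_ne {p q : ℕ} (hp : p.Prime) (a : ℕ) (ha : ¬ p ∣ a)
    (hrot : (finRotate p) ^ p = 1) (π : Fin p → Equiv.Perm (Fin q)) :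
    orbCount (bflyP a π) = orbCount (Wc ((finRotate p) ^ a) π p ⟨0, hp.pos⟩) := by
  obtain ⟨m, hm⟩ : ∃ m, p = m + 1 := ⟨p - 1, (Nat.succ_pred_eq_of_pos hp.pos).symm⟩
  subst hm
  apply orbCount_cyclic (bflyP a π) ((finRotate (m+1)) ^ a) ⟨0, hp.pos⟩ (m+1)
  · intro x; rfl
  · exact rot_trans_of_coprime hp.one_lt ((Nat.coprime_comm).1 ((hp.coprime_iff_not_dvd).2 ha))
  · intro r
    rw [bflyP_pow]
    rw [show (((finRotate (m+1)) ^ a) ^ (m+1)) = 1 from rot_c_eq_one hrot]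
    rfl
  · exact rot_per_of_prime hp ha


lemma sum_piFinset_coord {p : ℕ} {G : Type*} [DecidableEq G] (s : Finset G) (i₀ : Fin p)
    (g : G → ℝ) :
    ∑ π ∈ Fintype.piFinset (fun _ : Fin p => s), g (π i₀)
      = (s.card : ℝ) ^ (p - 1) * ∑ x ∈ s, g x := by
  have h := Finset.prod_univ_sum (fun _ : Fin p => s)
    (fun i x => if i = i₀ then g x else 1)
  have hR : ∀ π : Fin p → G, (∏ i, if i = i₀ then g (π i) else 1) = g (π i₀) := by
    intro π
    rw [Finset.prod_ite_eq' Finset.univ i₀ (fun i => g (π i))]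
    simp
  calc ∑ π ∈ Fintype.piFinset (fun _ : Fin p => s), g (π i₀)
      = ∑ π ∈ Fintype.piFinset (fun _ : Fin p => s), ∏ i, (if i = i₀ then g (π i) else 1) :=
        Finset.sum_congr rfl (fun π _ => (hR π).symm)
    _ = ∏ i : Fin p, ∑ x ∈ s, (if i = i₀ then g x else 1) := h.symm
    _ = (∑ x ∈ s, if i₀ = i₀ then g x else 1) *
          ∏ i ∈ Finset.univ.erase i₀, (∑ x ∈ s, if i = i₀ then g x else 1) :=
        (Finset.mul_prod_erase Finset.univ _ (Finset.mem_univ i₀)).symm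
    _ = (∑ x ∈ s, g x) * (s.card : ℝ) ^ (p - 1) := by
        congr 1
        · simp
        · calc ∏ i ∈ Finset.univ.erase i₀, (∑ x ∈ s, if i = i₀ then g x else 1)
              = ∏ _i ∈ Finset.univ.erase i₀, (s.card : ℝ) :=
                Finset.prod_congr rfl (fun i hi => by
                  simp only [if_neg (Finset.mem_erase.1 hi).1, Finset.sum_const,
                    nsmul_eq_mul, mul_one])
            _ = (s.card : ℝ) ^ (p - 1) := by
                rw [Finset.prod_const, Finset.card_erase_of_mem (Finset.mem_univ i₀),
                  Finset.card_univ, Fintype.card_fin]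
    _ = (s.card : ℝ) ^ (p - 1) * ∑ x ∈ s, g x := mul_comm _ _

lemma sum_piFinset_two {G : Type*} [DecidableEq G] (s : Finset G) (g h : G → ℝ) :
    ∑ π ∈ Fintype.piFinset (fun _ : Fin 2 => s), g (π 0) * h (π 1)
      = (∑ x ∈ s, g x) * (∑ x ∈ s, h x) := by
  have hh := Finset.prod_univ_sum (fun _ : Fin 2 => s)
    (fun i x => if i = 0 then g x else h x)
  rw [Fin.prod_univ_two] at hh
  simp only [if_pos rfl, if_true, eq_self_iff_true, if_neg (show (1 : Fin 2) ≠ 0 by decide)] at hh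
  rw [hh]
  apply Finset.sum_congr rfl
  intro π _
  rw [Fin.prod_univ_two]
  simp

lemma sum_piFinset_update {p q : ℕ} (s : Finset (Equiv.Perm (Fin q)))
    (hmul : ∀ σ ∈ s, ∀ τ ∈ s, σ * τ ∈ s) (hinv : ∀ σ ∈ s, σ⁻¹ ∈ s)
    (i₀ : Fin p) (w : (Fin p → Equiv.Perm (Fin q)) → Equiv.Perm (Fin q))
    (hw_mem : ∀ π : Fin p → Equiv.Perm (Fin q), (∀ i, π i ∈ s) → w π ∈ s)
    (hw_upd : ∀ π g, w (Function.update π i₀ g) = w π)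
    (f : Equiv.Perm (Fin q) → ℝ) :
    ∑ π ∈ Fintype.piFinset (fun _ : Fin p => s), f (w π * π i₀)
      = ∑ π ∈ Fintype.piFinset (fun _ : Fin p => s), f (π i₀) := by
  classical
  apply Finset.sum_nbij' (fun π => Function.update π i₀ (w π * π i₀))
    (fun π => Function.update π i₀ ((w π)⁻¹ * π i₀))
  · intro π hπ
    rw [Fintype.mem_piFinset] at *
    intro j
    by_cases hj : j = i₀
    · subst hj; rw [Function.update_self]
      exact hmul _ (hw_mem π hπ) _ (hπ j)
    · rw [Function.update_of_ne hj]; exact hπ j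
  · intro π hπ
    rw [Fintype.mem_piFinset] at *
    intro j
    by_cases hj : j = i₀
    · subst hj; rw [Function.update_self]
      exact hmul _ (hinv _ (hw_mem π hπ)) _ (hπ j)
    · rw [Function.update_of_ne hj]; exact hπ j
  · intro π _
    rw [hw_upd, Function.update_self, Function.update_idem, inv_mul_cancel_left,
      Function.update_eq_self]
  · intro π _
    rw [hw_upd, Function.update_self, Function.update_idem, mul_inv_cancel_left,
      Function.update_eq_self]
  · intro π _
    rw [Function.update_self]


/-- The parameterization map for the inductive step. -/
def Fmap (p n : ℕ) : Fin p × (Fin p → Equiv.Perm (Fin (p ^ n))) → Equiv.Perm (Fin (p ^ (n + 1))) :=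
  fun x => (Ebig p n).permCongr (bflyP x.1.val x.2)

section Step

variable {p n : ℕ} (s : Finset (Equiv.Perm (Fin (p ^ n))))

lemma rot_card (hp0 : 0 < p) : (finRotate p) ^ p = 1 := by
  obtain ⟨m, rfl⟩ : ∃ m, p = m + 1 := ⟨p - 1, by omega⟩
  exact rot_pow_card m

/-- The step Finset. -/
noncomputable def Dstep (p n : ℕ) (s : Finset (Equiv.Perm (Fin (p ^ n)))) :
    Finset (Equiv.Perm (Fin (p ^ (n + 1)))) := by
  classical
  exact (Finset.univ ×ˢ Fintype.piFinset (fun _ : Fin p => s)).image (Fmap p n)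

lemma Dstep_coe (hp : p.Prime) (hs : ↑s = nonsimpleButterfly p n) :
    ↑(Dstep p n s) = nonsimpleButterfly p (n + 1) := by
  classical
  ext σ
  rw [Dstep, mem_butterfly_succ_iff hp.pos (rot_card hp.pos)]
  simp only [Finset.mem_coe, Finset.mem_image, Finset.mem_product, Finset.mem_univ, true_and,
    Fintype.mem_piFinset]
  constructor
  · rintro ⟨⟨a, π⟩, hπ, rfl⟩
    exact ⟨a, π, fun i => by rw [← hs]; exact hπ i, rfl⟩
  · rintro ⟨a, π, hπ, rfl⟩
    exact ⟨⟨a, π⟩, fun i => by rw [← Finset.mem_coe, hs]; exact hπ i, rfl⟩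

lemma Dstep_card (hp : p.Prime) : (Dstep p n s).card = p * s.card ^ p := by
  classical
  have hF : Function.Injective (Fmap p n) := param_inj hp.pos
  rw [Dstep, Finset.card_image_of_injective _ hF, Finset.card_product,
    Finset.card_univ, Fintype.card_fin, Fintype.card_piFinset]
  simp

lemma Dstep_one (hp : p.Prime) (h1 : (1 : Equiv.Perm (Fin (p ^ n))) ∈ s) :
    (1 : Equiv.Perm (Fin (p ^ (n + 1)))) ∈ Dstep p n s := by
  classical
  rw [Dstep, Finset.mem_image]
  refine ⟨(⟨0, hp.pos⟩, fun _ => 1), ?_, ?_⟩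
  · rw [Finset.mem_product, Fintype.mem_piFinset]
    exact ⟨Finset.mem_univ _, fun _ => h1⟩
  · show (Ebig p n).permCongr (bflyP (0 : ℕ) (fun _ => 1)) = 1
    rw [bflyP_one, permCongr_one']


lemma Dstep_mul (hp : p.Prime) (hmul : ∀ σ ∈ s, ∀ τ ∈ s, σ * τ ∈ s) :
    ∀ σ ∈ Dstep p n s, ∀ τ ∈ Dstep p n s, σ * τ ∈ Dstep p n s := by
  classical
  rintro σ hσ τ hτ
  rw [Dstep, Finset.mem_image] at hσ hτ ⊢
  obtain ⟨⟨a, π⟩, hD, rfl⟩ := hσ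
  obtain ⟨⟨b, ρ⟩, hD', rfl⟩ := hτ
  rw [Finset.mem_product, Fintype.mem_piFinset] at hD hD'
  refine ⟨(⟨(a.val + b.val) % p, Nat.mod_lt _ hp.pos⟩,
    fun i => π ((finRotate p ^ b.val) i) * ρ i), ?_, ?_⟩
  · rw [Finset.mem_product, Fintype.mem_piFinset]
    exact ⟨Finset.mem_univ _, fun i => hmul _ (hD.2 _) _ (hD'.2 i)⟩
  · simp only [Fmap]
    rw [← permCongr_mul', bflyP_mul]
    congr 1
    exact (bflyP_congr_exp _ (pow_mod_of_pow_eq_one (rot_card hp.pos) (a.val + b.val))).symm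

lemma Dstep_inv (hp : p.Prime) (hinv : ∀ σ ∈ s, σ⁻¹ ∈ s) :
    ∀ σ ∈ Dstep p n s, σ⁻¹ ∈ Dstep p n s := by
  classical
  rintro σ hσ
  rw [Dstep, Finset.mem_image] at hσ ⊢
  obtain ⟨⟨a, π⟩, hD, rfl⟩ := hσ
  rw [Finset.mem_product, Fintype.mem_piFinset] at hD
  set b₀ := p - a.val with hb₀
  set ρ : Fin p → Equiv.Perm (Fin (p ^ n)) := fun i => (π ((finRotate p ^ b₀) i))⁻¹ with hρ
  have hmul1 : bflyP a.val π * bflyP b₀ ρ = 1 := by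
    rw [bflyP_mul]
    have hexp : (finRotate p) ^ (a.val + b₀) = (finRotate p) ^ (0 : ℕ) := by
      rw [show a.val + b₀ = p from (by have := a.isLt; omega), rot_card hp.pos, pow_zero]
    have hfun : (fun i => π ((finRotate p ^ b₀) i) * ρ i)
        = fun _ : Fin p => (1 : Equiv.Perm (Fin (p ^ n))) := by
      funext i; simp [hρ]
    rw [hfun, bflyP_congr_exp _ hexp, bflyP_one]
  refine ⟨(⟨b₀ % p, Nat.mod_lt _ hp.pos⟩, ρ), ?_, ?_⟩
  · rw [Finset.mem_product, Fintype.mem_piFinset]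
    exact ⟨Finset.mem_univ _, fun i => hinv _ (hD.2 _)⟩
  · simp only [Fmap]
    rw [← permCongr_inv', inv_eq_of_mul_eq_one_right hmul1]
    congr 1
    exact (bflyP_congr_exp _ (pow_mod_of_pow_eq_one (rot_card hp.pos) b₀)).symm

end Step


lemma numCycles_eq_orbCount' {M : ℕ} (σ : Equiv.Perm (Fin M)) : numCycles σ = orbCount σ :=
  numCycles_eq_orbCount σ

lemma Dstep_sum {p n : ℕ} (hp : p.Prime) (s : Finset (Equiv.Perm (Fin (p ^ n))))
    (f : Equiv.Perm (Fin (p ^ (n + 1))) → ℝ) :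
    ∑ σ ∈ Dstep p n s, f σ
      = ∑ a : Fin p, ∑ π ∈ Fintype.piFinset (fun _ : Fin p => s), f (Fmap p n (a, π)) := by
  classical
  have hinj : ∀ x ∈ (Finset.univ ×ˢ Fintype.piFinset fun _ : Fin p => s),
      ∀ y ∈ (Finset.univ ×ˢ Fintype.piFinset fun _ : Fin p => s),
      Fmap p n x = Fmap p n y → x = y := fun x _ y _ h => param_inj hp.pos h
  rw [Dstep, Finset.sum_image hinj, Finset.sum_product]

lemma Fmap_zero_orb {p n : ℕ} (hp : p.Prime) (π : Fin p → Equiv.Perm (Fin (p ^ n))) :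
    numCycles (Fmap p n (⟨0, hp.pos⟩, π)) = ∑ i, orbCount (π i) := by
  show numCycles ((Ebig p n).permCongr (bflyP (0 : ℕ) π)) = _
  rw [numCycles_eq_orbCount', orbCount_permCongr, bflyP_zero, orbCount_prodCongrRight]

lemma Fmap_ne_orb {p n : ℕ} (hp : p.Prime) (a : Fin p) (ha : a.val ≠ 0)
    (π : Fin p → Equiv.Perm (Fin (p ^ n))) :
    numCycles (Fmap p n (a, π))
      = orbCount (Wc ((finRotate p) ^ a.val) π (p - 1)
          (((finRotate p) ^ a.val) ⟨0, hp.pos⟩) * π ⟨0, hp.pos⟩) := by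
  have hadvd : ¬ p ∣ a.val := fun hdvd => by
    have h1 := Nat.le_of_dvd (Nat.pos_of_ne_zero ha) hdvd
    have h2 := a.isLt
    omega
  show numCycles ((Ebig p n).permCongr (bflyP a.val π)) = _
  rw [numCycles_eq_orbCount', orbCount_permCongr,
    orbCount_bflyP_ne hp a.val hadvd (rot_card hp.pos)]
  congr 1
  have hp1 : p = (p - 1) + 1 := by have := hp.pos; omega
  calc Wc ((finRotate p) ^ a.val) π p ⟨0, hp.pos⟩
      = Wc ((finRotate p) ^ a.val) π ((p - 1) + 1) ⟨0, hp.pos⟩ := by rw [← hp1]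
    _ = _ := rfl

lemma Wc_upd {p n : ℕ} (hp : p.Prime) {a : ℕ} (ha : ¬ p ∣ a)
    (π : Fin p → Equiv.Perm (Fin (p ^ n))) (g : Equiv.Perm (Fin (p ^ n))) (k : ℕ) (hk : k < p) :
    Wc ((finRotate p) ^ a) (Function.update π ⟨0, hp.pos⟩ g) k (((finRotate p) ^ a) ⟨0, hp.pos⟩)
      = Wc ((finRotate p) ^ a) π k (((finRotate p) ^ a) ⟨0, hp.pos⟩) := by
  classical
  apply Wc_congr
  intro t ht
  have hne : ((((finRotate p) ^ a) ^ t)) ((((finRotate p) ^ a)) ⟨0, hp.pos⟩) ≠ ⟨0, hp.pos⟩ := by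
    intro heq
    have h2 : (((finRotate p) ^ a) ^ (t + 1)) ⟨0, hp.pos⟩ = ⟨0, hp.pos⟩ := by
      rw [pow_succ, Equiv.Perm.mul_apply]; exact heq
    have h3 : ((p : ℤ)) ∣ ((t + 1 : ℕ) : ℤ) := by
      apply rot_per_of_prime hp ha
      rw [zpow_natCast]; exact h2
    have h4 : p ∣ (t + 1) := Int.ofNat_dvd.1 h3
    have h5 := Nat.le_of_dvd (Nat.succ_pos t) h4
    omega
  exact Function.update_of_ne hne g π

lemma Dstep_inner_ne {p n : ℕ} (hp : p.Prime) (s : Finset (Equiv.Perm (Fin (p ^ n))))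
    (h1 : (1 : Equiv.Perm (Fin (p ^ n))) ∈ s)
    (hmul : ∀ σ ∈ s, ∀ τ ∈ s, σ * τ ∈ s) (hinv : ∀ σ ∈ s, σ⁻¹ ∈ s)
    (a : Fin p) (ha : a.val ≠ 0) (u : ℕ → ℝ) :
    ∑ π ∈ Fintype.piFinset (fun _ : Fin p => s), u (numCycles (Fmap p n (a, π)))
      = (s.card : ℝ) ^ (p - 1) * ∑ x ∈ s, u (orbCount x) := by
  classical
  have hadvd : ¬ p ∣ a.val := fun hdvd => by
    have h1' := Nat.le_of_dvd (Nat.pos_of_ne_zero ha) hdvd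
    have h2 := a.isLt
    omega
  have hstep : ∀ π ∈ Fintype.piFinset (fun _ : Fin p => s),
      u (numCycles (Fmap p n (a, π)))
        = u (orbCount (Wc ((finRotate p) ^ a.val) π (p - 1)
              (((finRotate p) ^ a.val) ⟨0, hp.pos⟩) * π ⟨0, hp.pos⟩)) :=
    fun π _ => by rw [Fmap_ne_orb hp a ha π]
  rw [Finset.sum_congr rfl hstep]
  have hupd := sum_piFinset_update s hmul hinv ⟨0, hp.pos⟩
    (fun π => Wc ((finRotate p) ^ a.val) π (p - 1) (((finRotate p) ^ a.val) ⟨0, hp.pos⟩))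
    (fun π hπ => Wc_mem _ π s h1 hmul hπ _ _)
    (fun π g => Wc_upd hp hadvd π g (p - 1) (by have := hp.pos; omega))
    (fun x => u (orbCount x))
  rw [hupd]
  exact sum_piFinset_coord s ⟨0, hp.pos⟩ (fun x => u (orbCount x))


lemma Dstep_inner_zero_mom1 {p n : ℕ} (hp : p.Prime) (s : Finset (Equiv.Perm (Fin (p ^ n)))) :
    ∑ π ∈ Fintype.piFinset (fun _ : Fin p => s),
        ((numCycles (Fmap p n (⟨0, hp.pos⟩, π)) : ℝ))
      = (p : ℝ) * ((s.card : ℝ) ^ (p - 1) * ∑ x ∈ s, (orbCount x : ℝ)) := by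
  classical
  have h1 : ∀ π ∈ Fintype.piFinset (fun _ : Fin p => s),
      ((numCycles (Fmap p n (⟨0, hp.pos⟩, π)) : ℝ)) = ∑ i, (fun x => (orbCount x : ℝ)) (π i) := by
    intro π _
    rw [Fmap_zero_orb hp π]
    push_cast
    rfl
  rw [Finset.sum_congr rfl h1, Finset.sum_comm,
    Finset.sum_congr rfl (fun i _ => sum_piFinset_coord s i (fun x => (orbCount x : ℝ))),
    Finset.sum_const, Finset.card_univ, Fintype.card_fin, nsmul_eq_mul]

lemma butterfly_master (p : ℕ) (hp : p.Prime) (n : ℕ) :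
    ∃ s : Finset (Equiv.Perm (Fin (p ^ n))),
      (↑s = nonsimpleButterfly p n) ∧ ((1 : Equiv.Perm (Fin (p ^ n))) ∈ s) ∧
      (∀ σ ∈ s, ∀ τ ∈ s, σ * τ ∈ s) ∧ (∀ σ ∈ s, σ⁻¹ ∈ s) ∧
      ((∑ σ ∈ s, (numCycles σ : ℝ)) = (s.card : ℝ) * (2 - 1/(p : ℝ)) ^ n) ∧
      (p = 2 → (∑ σ ∈ s, (numCycles σ : ℝ) ^ 2)
        = (s.card : ℝ) * ((4/3) * ((3:ℝ)/2) ^ (2*n) - (1/3) * ((3:ℝ)/2) ^ n)) := by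
  classical
  induction n with
  | zero =>
    have hone : numCycles (1 : Equiv.Perm (Fin (p ^ 0))) = 1 := by
      unfold numCycles
      rw [Equiv.Perm.cycleType_one]
      rw [Multiset.card_zero, zero_add, Finset.filter_true_of_mem (fun x _ => Equiv.Perm.one_apply x), Finset.card_univ, Fintype.card_fin]
      exact pow_zero p
    refine ⟨{1}, ?_, Finset.mem_singleton_self 1, ?_, ?_, ?_, ?_⟩
    · show _ = nonsimpleButterfly p 0
      unfold nonsimpleButterfly
      exact Finset.coe_singleton _
    · intro σ hσ τ hτ
      simp only [Finset.mem_singleton] at *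
      subst hσ; subst hτ; exact mul_one _
    · intro σ hσ
      simp only [Finset.mem_singleton] at *
      subst hσ; exact inv_one
    · rw [Finset.sum_singleton, hone, Finset.card_singleton]; simp
    · intro _; rw [Finset.sum_singleton, hone, Finset.card_singleton]; norm_num
  | succ n IH =>
    obtain ⟨s, hs, h1, hmul, hinv, hT, hS⟩ := IH
    have hTb : (∑ x ∈ s, (orbCount x : ℝ)) = (s.card : ℝ) * (2 - 1/(p : ℝ)) ^ n := by
      rw [← hT]
      exact (Finset.sum_congr rfl (fun x _ => by rw [numCycles_eq_orbCount'])).symm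
    have hKp : ((s.card : ℝ)) ^ p = (s.card : ℝ) ^ (p - 1) * (s.card : ℝ) := by
      have hgen : ∀ K : ℝ, K ^ p = K ^ (p - 1) * K := by
        intro K
        conv_lhs => rw [show p = (p - 1) + 1 from by have := hp.pos; omega]
        rw [pow_succ]
      exact hgen _
    have hpm : ((p - 1 : ℕ) : ℝ) = (p : ℝ) - 1 := by
      have h1p : 1 ≤ p := hp.pos
      push_cast [Nat.cast_sub h1p]
      ring
    have hpne : (p : ℝ) ≠ 0 := by exact_mod_cast hp.pos.ne'
    refine ⟨Dstep p n s, Dstep_coe s hp hs, Dstep_one s hp h1,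
      Dstep_mul s hp hmul, Dstep_inv s hp hinv, ?_, ?_⟩
    · -- first moment
      rw [Dstep_sum hp s (fun σ => (numCycles σ : ℝ))]
      rw [← Finset.add_sum_erase _ _ (Finset.mem_univ (⟨0, hp.pos⟩ : Fin p))]
      rw [Dstep_inner_zero_mom1 hp s]
      have hne : ∀ a ∈ Finset.univ.erase (⟨0, hp.pos⟩ : Fin p),
          (∑ π ∈ Fintype.piFinset (fun _ : Fin p => s), ((numCycles (Fmap p n (a, π)) : ℝ)))
            = (s.card : ℝ) ^ (p - 1) * ∑ x ∈ s, (orbCount x : ℝ) := by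
        intro a ha
        have hav : a.val ≠ 0 := by
          intro h0
          exact (Finset.mem_erase.1 ha).1 (Fin.ext h0)
        exact Dstep_inner_ne hp s h1 hmul hinv a hav (fun k => (k : ℝ))
      rw [Finset.sum_congr rfl hne, Finset.sum_const,
        Finset.card_erase_of_mem (Finset.mem_univ _), Finset.card_univ, Fintype.card_fin,
        nsmul_eq_mul]
      have hcard : ((Dstep p n s).card : ℝ) = (p : ℝ) * (s.card : ℝ) ^ p := by
        rw [Dstep_card s hp]; push_cast; ring
      rw [hcard, hTb, hKp, hpm, pow_succ]
      field_simp
      ring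
    · -- second moment, p = 2
      intro hp2
      subst hp2
      have hSb' : (∑ x ∈ s, (orbCount x : ℝ) ^ 2)
          = (s.card : ℝ) * ((4/3) * ((3:ℝ)/2) ^ (2*n) - (1/3) * ((3:ℝ)/2) ^ n) := by
        rw [← hS rfl]
        exact (Finset.sum_congr rfl (fun x _ => by rw [numCycles_eq_orbCount'])).symm
      rw [Dstep_sum hp s (fun σ => (numCycles σ : ℝ) ^ 2)]
      rw [Fin.sum_univ_two]
      have hzero : ∑ π ∈ Fintype.piFinset (fun _ : Fin 2 => s),
          ((numCycles (Fmap 2 n ((0 : Fin 2), π)) : ℝ)) ^ 2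
            = 2 * ((s.card : ℝ) * (∑ x ∈ s, (orbCount x : ℝ) ^ 2))
              + 2 * (∑ x ∈ s, (orbCount x : ℝ)) ^ 2 := by
        have hexp : ∀ π ∈ Fintype.piFinset (fun _ : Fin 2 => s),
            ((numCycles (Fmap 2 n ((0 : Fin 2), π)) : ℝ)) ^ 2
              = (fun x => (orbCount x : ℝ) ^ 2) (π 0)
                + (2 * ((fun x => (orbCount x : ℝ)) (π 0) * (fun x => (orbCount x : ℝ)) (π 1))
                  + (fun x => (orbCount x : ℝ) ^ 2) (π 1)) := by
          intro π _
          rw [show Fmap 2 n ((0 : Fin 2), π) = Fmap 2 n (⟨0, hp.pos⟩, π) from rfl,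
            Fmap_zero_orb hp π]
          push_cast
          rw [Fin.sum_univ_two]
          ring
        rw [Finset.sum_congr rfl hexp, Finset.sum_add_distrib, Finset.sum_add_distrib,
          ← Finset.mul_sum,
          sum_piFinset_two s (fun x => (orbCount x : ℝ)) (fun x => (orbCount x : ℝ)),
          sum_piFinset_coord s 0 (fun x => (orbCount x : ℝ) ^ 2),
          sum_piFinset_coord s 1 (fun x => (orbCount x : ℝ) ^ 2)]
        norm_num
        ring
      have hone' : ∑ π ∈ Fintype.piFinset (fun _ : Fin 2 => s),
          ((numCycles (Fmap 2 n ((1 : Fin 2), π)) : ℝ)) ^ 2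
            = (s.card : ℝ) ^ (2 - 1) * ∑ x ∈ s, (orbCount x : ℝ) ^ 2 :=
        Dstep_inner_ne hp s h1 hmul hinv 1 (by decide) (fun k => (k : ℝ) ^ 2)
      rw [hzero, hone']
      have hcard : ((Dstep 2 n s).card : ℝ) = 2 * (s.card : ℝ) ^ 2 := by
        rw [Dstep_card s hp]; push_cast; ring
      rw [hcard, hTb, hSb']
      rw [show 2*(n+1) = 2*n + 2 from by ring, pow_add,
        show ((3:ℝ)/2)^(2*n) = (((3:ℝ)/2)^n)^2 from by rw [two_mul, pow_add, sq],
        pow_succ]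
      push_cast
      norm_num
      ring


/-- For `σ` uniform on the nonsimple `p`-nary butterfly permutations (`p` prime),
`E C(σ) = (2 − 1/p)ⁿ`; moreover for `p = 2`,
`E[C(σ)²] = (4/3)(3/2)^{2n} − (1/3)(3/2)ⁿ` and
`Var C(σ) = (1/3)(3/2)^{2n} − (1/3)(3/2)ⁿ`. -/
theorem nonsimpleButterfly_cycle_moments (p n : ℕ) (hp : p.Prime) :
    (1 / ((nonsimpleButterfly p n).ncard : ℝ)) *
        ∑ᶠ σ ∈ nonsimpleButterfly p n, (numCycles σ : ℝ) = (2 - 1 / (p : ℝ)) ^ n ∧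
    (p = 2 →
      (1 / ((nonsimpleButterfly p n).ncard : ℝ)) *
          ∑ᶠ σ ∈ nonsimpleButterfly p n, (numCycles σ : ℝ) ^ 2 =
        (4 / 3) * ((3 : ℝ) / 2) ^ (2 * n) - (1 / 3) * ((3 : ℝ) / 2) ^ n ∧
      (1 / ((nonsimpleButterfly p n).ncard : ℝ)) *
          (∑ᶠ σ ∈ nonsimpleButterfly p n, (numCycles σ : ℝ) ^ 2) -
        ((1 / ((nonsimpleButterfly p n).ncard : ℝ)) *
          ∑ᶠ σ ∈ nonsimpleButterfly p n, (numCycles σ : ℝ)) ^ 2 =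
        (1 / 3) * ((3 : ℝ) / 2) ^ (2 * n) - (1 / 3) * ((3 : ℝ) / 2) ^ n) := by
  obtain ⟨s, hs, h1, hmul, hinv, hT, hS⟩ := butterfly_master p hp n
  have hK : (0:ℝ) < (s.card : ℝ) := by
    exact_mod_cast Finset.card_pos.2 ⟨1, h1⟩
  have hKne : (s.card : ℝ) ≠ 0 := ne_of_gt hK
  have hncard : (nonsimpleButterfly p n).ncard = s.card := by
    rw [← hs, Set.ncard_coe_finset]
  have hfs1 : ∑ᶠ σ ∈ nonsimpleButterfly p n, (numCycles σ : ℝ) = ∑ σ ∈ s, (numCycles σ : ℝ) := by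
    rw [← hs]; exact finsum_mem_coe_finset _ _
  have hfs2 : ∑ᶠ σ ∈ nonsimpleButterfly p n, (numCycles σ : ℝ) ^ 2
      = ∑ σ ∈ s, (numCycles σ : ℝ) ^ 2 := by
    rw [← hs]; exact finsum_mem_coe_finset _ _
  constructor
  · rw [hfs1, hncard, hT]
    field_simp
  · intro hp2
    subst hp2
    have hS' := hS rfl
    constructor
    · rw [hfs2, hncard, hS']
      field_simp
    · rw [hfs1, hfs2, hncard, hS', hT]
      rw [show (2 - 1/((2:ℕ):ℝ)) = 3/2 from by norm_num]
      rw [show ((3:ℝ)/2)^(2*n) = (((3:ℝ)/2)^n)^2 from by rw [two_mul, pow_add, sq]]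
      field_simp
      ring
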